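/- Consider the Minimal Envied Swap process: starting from all-empty bundles and charity C = M, repeatedly find a minimal envied feasible subset T of C (T satisfies |T ∩ M_k| ≤ 1 for all blocks k, some agent i has u_i(A_i) < u_i(T), and no agent envies a strict subset of T) and assign A_i := T, returning i's old bundle to charity. This process terminates after finitely many steps, and at termination no agent envies any feasible subset of the remaining charity. -/
import Mathlib


open Finset

/-- A subset is feasible if it has at most one good from each block. -/
def feasible {M : Type*} [Fintype M] [DecidableEq M] (blk : M → ℕ) (T : Finset M) : Prop :=
  ∀ k, (T.filter (fun g => blk g = k)).card ≤ 1

/-- The charity: goods not currently allocated to any agent. -/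
def charity {n : ℕ} {M : Type*} [Fintype M] [DecidableEq M]
    (A : Fin n → Finset M) : Finset M :=
  Finset.univ.filter (fun g => ∀ i, g ∉ A i)

/-- One step of the Minimal Envied Swap process: some agent `i` swaps her
bundle for a minimal envied feasible subset `T` of the charity. -/
def mesStep {n : ℕ} {M : Type*} [Fintype M] [DecidableEq M] (blk : M → ℕ)
    (u : Fin n → Finset M → ℝ) (A A' : Fin n → Finset M) : Prop :=
  ∃ T : Finset M, ∃ i : Fin n,
    T ⊆ charity A ∧ feasible blk T ∧ u i (A i) < u i T ∧
    (∀ j : Fin n, ∀ S : Finset M, S ⊂ T → ¬ u j (A j) < u j S) ∧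
    A' = Function.update A i T

/-- The Minimal Envied Swap process terminates after finitely many steps when
started from the all-empty allocation, and any state at which no step applies
has no agent envying any feasible subset of the remaining charity. -/
theorem stmt_10 {n : ℕ} {M : Type*} [Fintype M] [DecidableEq M] (blk : M → ℕ)
    (u : Fin n → Finset M → ℝ)
    (hmono : ∀ i (X Y : Finset M), X ⊆ Y → u i X ≤ u i Y) :
    (¬ ∃ f : ℕ → (Fin n → Finset M),
        f 0 = (fun _ => (∅ : Finset M)) ∧ ∀ t, mesStep blk u (f t) (f (t + 1))) ∧
    (∀ A : Fin n → Finset M, (¬ ∃ A', mesStep blk u A A') →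
      ∀ (T : Finset M) (i : Fin n), T ⊆ charity A → feasible blk T →
        ¬ u i (A i) < u i T) := by

  constructor
  · rintro ⟨f, -, hstep⟩
    have hg : StrictMono (fun t => ∑ i, u i (f t i)) := by
      apply strictMono_nat_of_lt_succ
      intro t
      obtain ⟨T, i, -, -, hlt, -, hA'⟩ := hstep t
      rw [hA']
      apply Finset.sum_lt_sum
      · intro j _
        by_cases hj : j = i
        · subst hj; simp [Function.update_self]; exact le_of_lt hlt
        · simp [Function.update_of_ne hj]
      · exact ⟨i, Finset.mem_univ i, by simpa [Function.update_self] using hlt⟩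
    have hinj : Function.Injective (fun t => ∑ i, u i (f t i)) := hg.injective
    have hfin : (Set.range (fun t => ∑ i, u i (f t i))).Finite := by
      have : Set.range (fun t => ∑ i, u i (f t i)) ⊆
          Set.range (fun A : Fin n → Finset M => ∑ i, u i (A i)) := by
        rintro x ⟨t, rfl⟩; exact ⟨f t, rfl⟩
      exact (Set.finite_range _).subset this
    exact (Set.infinite_range_of_injective hinj) hfin
  · intro A hno T
    induction T using Finset.strongInduction with
    | _ T ih =>
      intro i hTc hTf hlt
      by_cases hmin : ∃ j : Fin n, ∃ S : Finset M, S ⊂ T ∧ u j (A j) < u j S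
      · obtain ⟨j, S, hST, hjS⟩ := hmin
        have hSf : feasible blk S := fun k =>
          le_trans (Finset.card_le_card (Finset.filter_subset_filter _ hST.subset)) (hTf k)
        exact ih S hST j (hST.subset.trans hTc) hSf hjS
      · push_neg at hmin
        exact hno ⟨Function.update A i T, T, i, hTc, hTf, hlt,
          fun j S hST => not_lt.mpr (hmin j S hST), rfl⟩
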